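/- S-procedure implication: let C ∈ ℝ^{m×n}, Π, P, W positive semidefinite (with P ∈ ℝ^{n×n} positive definite), and constants α, β > 0. If there exist τ₁, τ₂ ≥ 0 such that the block matrix [[τ₁P − CᵀΠC, −CᵀΠ, 0],[−ΠC, τ₂I_m − Π, 0],[0, 0, 1 − τ₁α − τ₂β]] is positive semidefinite, then for all e ∈ ℝⁿ and η ∈ ℝᵐ with eᵀ P e ≤ α and ηᵀη ≤ β, one has (Ce + η)ᵀ Π (Ce + η) ≤ 1. -/

import Mathlib

open Matrix

/-- S-procedure implication for the monitor design. -/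
theorem stmt_14 {n m : ℕ} (C : Matrix (Fin m) (Fin n) ℝ)
    (Pm : Matrix (Fin m) (Fin m) ℝ) (hPm : Pm.PosSemidef)
    (P : Matrix (Fin n) (Fin n) ℝ) (hP : P.PosDef)
    (α β : ℝ) (hα : 0 < α) (hβ : 0 < β)
    (τ₁ τ₂ : ℝ) (hτ₁ : 0 ≤ τ₁) (hτ₂ : 0 ≤ τ₂)
    (h : (Matrix.fromBlocks
        (Matrix.fromBlocks (τ₁ • P - Cᵀ * Pm * C) (-(Cᵀ * Pm)) (-(Pm * C))
          (τ₂ • (1 : Matrix (Fin m) (Fin m) ℝ) - Pm))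
        0 0
        (Matrix.of fun (_ : Fin 1) (_ : Fin 1) => 1 - τ₁ * α - τ₂ * β)).PosSemidef) :
    ∀ (e : Fin n → ℝ) (η : Fin m → ℝ), e ⬝ᵥ (P *ᵥ e) ≤ α → η ⬝ᵥ η ≤ β →
      (C *ᵥ e + η) ⬝ᵥ (Pm *ᵥ (C *ᵥ e + η)) ≤ 1 := by
  intro e η he hη
  have key := h.dotProduct_mulVec_nonneg (Sum.elim (Sum.elim e η) 1)
  have hlast : (1 : Fin 1 → ℝ) ⬝ᵥ ((Matrix.of fun (_ : Fin 1) (_ : Fin 1) => 1 - τ₁ * α - τ₂ * β) *ᵥ (1 : Fin 1 → ℝ)) = 1 - τ₁ * α - τ₂ * β := by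
    simp [dotProduct, mulVec, Fin.sum_univ_one]
  simp only [star_trivial, fromBlocks_mulVec, sumElim_dotProduct_sumElim,
    Sum.elim_comp_inl, Sum.elim_comp_inr,
    Matrix.zero_mulVec, add_zero, zero_add, sub_mulVec, smul_mulVec, neg_mulVec,
    dotProduct_add, dotProduct_sub, dotProduct_smul, dotProduct_neg, smul_eq_mul,
    Matrix.mulVec_mulVec, Matrix.one_mulVec, hlast] at key
  have hsym : Pmᵀ = Pm := hPm.1
  have hswap : ∀ u v : Fin m → ℝ, u ⬝ᵥ Pm *ᵥ v = v ⬝ᵥ Pm *ᵥ u := by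
    intro u v
    rw [Matrix.dotProduct_mulVec, ← hsym, Matrix.vecMul_transpose, hsym,
      dotProduct_comm]
  have h1 : e ⬝ᵥ (Cᵀ * Pm * C) *ᵥ e = (C *ᵥ e) ⬝ᵥ Pm *ᵥ (C *ᵥ e) := by
    rw [← Matrix.mulVec_mulVec, ← Matrix.mulVec_mulVec, Matrix.dotProduct_mulVec,
      Matrix.vecMul_transpose]
  have h2 : e ⬝ᵥ (Cᵀ * Pm) *ᵥ η = (C *ᵥ e) ⬝ᵥ Pm *ᵥ η := by
    rw [← Matrix.mulVec_mulVec, Matrix.dotProduct_mulVec, Matrix.vecMul_transpose]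
  have h3 : η ⬝ᵥ (Pm * C) *ᵥ e = (C *ᵥ e) ⬝ᵥ Pm *ᵥ η := by
    rw [← Matrix.mulVec_mulVec, hswap]
  rw [h1, h2, h3] at key
  have hgoal : (C *ᵥ e + η) ⬝ᵥ Pm *ᵥ (C *ᵥ e + η)
      = (C *ᵥ e) ⬝ᵥ Pm *ᵥ (C *ᵥ e) + 2 * ((C *ᵥ e) ⬝ᵥ Pm *ᵥ η) + η ⬝ᵥ Pm *ᵥ η := by
    rw [Matrix.mulVec_add, dotProduct_add, add_dotProduct, add_dotProduct,
      hswap η (C *ᵥ e)]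
    ring
  rw [hgoal]
  nlinarith [mul_nonneg hτ₁ (sub_nonneg.2 he), mul_nonneg hτ₂ (sub_nonneg.2 hη)]
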